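/- For θ ∈ (0, π/2) and n, N ∈ N, let F̃ be the N×N lower triangular matrix with entries f̃_{i1} = (cos θ)^{i−1}/√n for all i ≤ N and f̃_{ij} = sin θ · (cos θ)^{i−j}/√n for 2 ≤ j ≤ i. Then sin θ/√n ≤ ‖F̃‖ ≤ 1/((1 − cos θ)√n), ‖F̃^{-1}‖ ≤ (1 + cos θ)√n/sin θ, and hence the condition number satisfies ‖F̃‖·‖F̃^{-1}‖ ≤ (1 + cos θ)/(sin θ (1 − cos θ)). -/

import Mathlib

/-- The operator (spectral) norm of a matrix, viewed as a map between Euclidean spaces. -/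
noncomputable def matOpNorm {m n : ℕ} (A : Matrix (Fin m) (Fin n) ℝ) : ℝ :=
  ‖LinearMap.toContinuousLinearMap (Matrix.toEuclideanLin A)‖

lemma matOpNorm_nonneg {m n : ℕ} (A : Matrix (Fin m) (Fin n) ℝ) : 0 ≤ matOpNorm A :=
  norm_nonneg _

open Finset in
lemma schur_test {M N : ℕ} (A : Matrix (Fin M) (Fin N) ℝ) (B : ℝ) (hB : 0 ≤ B)
    (hrow : ∀ i, ∑ j, |A i j| ≤ B) (hcol : ∀ j, ∑ i, |A i j| ≤ B) :
    matOpNorm A ≤ B := by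
  refine ContinuousLinearMap.opNorm_le_bound _ hB fun x => ?_
  have hx : ‖(LinearMap.toContinuousLinearMap (Matrix.toEuclideanLin A)) x‖
      = ‖Matrix.toEuclideanLin A x‖ := rfl
  have happ : ∀ i, (Matrix.toEuclideanLin A x) i = ∑ j, A i j * x j := fun _ => rfl
  rw [hx, EuclideanSpace.norm_eq, EuclideanSpace.norm_eq,
    ← Real.sqrt_sq hB, ← Real.sqrt_mul (sq_nonneg B)]
  apply Real.sqrt_le_sqrt
  simp only [happ, Real.norm_eq_abs]
  calc ∑ i, |∑ j, A i j * x j| ^ 2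
      ≤ ∑ i, B * ∑ j, |A i j| * |x j| ^ 2 := by
        refine sum_le_sum fun i _ => ?_
        have h1 : |∑ j, A i j * x j| ≤ ∑ j, |A i j| * |x j| := by
          refine (Finset.abs_sum_le_sum_abs _ _).trans ?_
          exact sum_le_sum fun j _ => le_of_eq (abs_mul _ _)
        have h2 : (∑ j, |A i j| * |x j|) ^ 2
            ≤ (∑ j, |A i j|) * ∑ j, |A i j| * |x j| ^ 2 :=
          sum_sq_le_sum_mul_sum_of_sq_eq_mul _ (fun _ _ => abs_nonneg _)
            (fun j _ => by positivity) (fun j _ => by ring)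
        calc |∑ j, A i j * x j| ^ 2 ≤ (∑ j, |A i j| * |x j|) ^ 2 :=
              pow_le_pow_left₀ (abs_nonneg _) h1 2
          _ ≤ (∑ j, |A i j|) * ∑ j, |A i j| * |x j| ^ 2 := h2
          _ ≤ B * ∑ j, |A i j| * |x j| ^ 2 :=
              mul_le_mul_of_nonneg_right (hrow i) (by positivity)
    _ = B * ∑ j, (∑ i, |A i j|) * |x j| ^ 2 := by
        rw [← mul_sum]
        congr 1
        rw [Finset.sum_comm]
        exact Finset.sum_congr rfl fun j _ => by rw [sum_mul]
    _ ≤ B * ∑ j, B * |x j| ^ 2 :=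
        mul_le_mul_of_nonneg_left
          (sum_le_sum fun j _ => mul_le_mul_of_nonneg_right (hcol j) (by positivity)) hB
    _ = B ^ 2 * ∑ j, |x j| ^ 2 := by rw [← mul_sum]; ring

open Finset in
lemma abs_entry_le_opNorm {M N : ℕ} (A : Matrix (Fin M) (Fin N) ℝ) (i0 : Fin M) (j0 : Fin N) :
    |A i0 j0| ≤ matOpNorm A := by
  set e : EuclideanSpace ℝ (Fin N) := EuclideanSpace.single j0 (1 : ℝ) with he
  have hnorm : ‖e‖ = 1 := by rw [he, EuclideanSpace.norm_single, norm_one]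
  have h1 : ‖(LinearMap.toContinuousLinearMap (Matrix.toEuclideanLin A)) e‖
      ≤ matOpNorm A * ‖e‖ := ContinuousLinearMap.le_opNorm _ _
  rw [hnorm, mul_one] at h1
  refine le_trans ?_ h1
  have happ : ∀ i, (Matrix.toEuclideanLin A e) i = ∑ j, A i j * e j := fun _ => rfl
  have hx : ‖(LinearMap.toContinuousLinearMap (Matrix.toEuclideanLin A)) e‖
      = ‖Matrix.toEuclideanLin A e‖ := rfl
  rw [hx, EuclideanSpace.norm_eq]
  have hval : (Matrix.toEuclideanLin A e) i0 = A i0 j0 := by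
    rw [happ]
    have h : ∀ j : Fin N, e j = if j = j0 then 1 else 0 := fun j => by
      rw [he]; exact EuclideanSpace.single_apply j0 1 j
    simp only [h, mul_ite, mul_one, mul_zero, Finset.sum_ite_eq', Finset.mem_univ, if_true]
  calc |A i0 j0| = Real.sqrt (‖(Matrix.toEuclideanLin A e) i0‖ ^ 2) := by
        rw [hval, Real.norm_eq_abs, Real.sqrt_sq (abs_nonneg _)]
    _ ≤ _ := by
        apply Real.sqrt_le_sqrt
        exact Finset.single_le_sum (f := fun i => ‖(Matrix.toEuclideanLin A) e i‖ ^ 2)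
          (fun i _ => by positivity) (Finset.mem_univ i0)

open Finset in
lemma geom_any {c : ℝ} (hc0 : 0 ≤ c) (hc1 : c < 1) (S : Finset ℕ) :
    ∑ k ∈ S, c ^ k ≤ 1 / (1 - c) := by
  obtain ⟨M, hM⟩ := S.exists_nat_subset_range
  have h1c : (0:ℝ) < 1 - c := by linarith
  calc ∑ k ∈ S, c ^ k ≤ ∑ k ∈ range M, c ^ k :=
        sum_le_sum_of_subset_of_nonneg hM fun k _ _ => pow_nonneg hc0 k
    _ = (c ^ M - 1) / (c - 1) := geom_sum_eq (by linarith) M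
    _ = (1 - c ^ M) / (1 - c) := by
        rw [div_eq_div_iff (by linarith) (by linarith)]; ring
    _ ≤ 1 / (1 - c) := by gcongr <;> nlinarith [pow_nonneg hc0 M]

open Finset in
lemma sum_pow_cond_le {c : ℝ} (hc0 : 0 ≤ c) (hc1 : c < 1) {N : ℕ}
    (p : Fin N → Prop) [DecidablePred p] (e : Fin N → ℕ)
    (he : ∀ j j', p j → p j' → e j = e j' → j = j') :
    ∑ j, (if p j then c ^ e j else 0) ≤ 1 / (1 - c) := by
  rw [← Finset.sum_filter]
  have himg := Finset.sum_image (s := univ.filter p) (f := fun k : ℕ => c ^ k) (g := e)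
    (fun j hj j' hj' h => he j j' (by simpa using hj) (by simpa using hj') h)
  rw [← himg]
  exact geom_any hc0 hc1 _

open Finset in
lemma sum_ite_le {N : ℕ} (p : Fin N → Prop) [DecidablePred p] (a : ℝ) (ha : 0 ≤ a)
    (hp : ∀ j j', p j → p j' → j = j') :
    (∑ j, if p j then a else 0) ≤ a := by
  by_cases h : ∃ j, p j
  · obtain ⟨j0, hj0⟩ := h
    rw [Finset.sum_eq_single j0 (fun j _ hj => if_neg fun hpj => hj (hp j j0 hpj hj0))
      (fun h => absurd (mem_univ j0) h)]
    split <;> simp [ha]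
  · push_neg at h
    rw [Finset.sum_eq_zero fun j _ => if_neg (h j)]
    exact ha

open Finset in
lemma sum_ite_unique {N : ℕ} (p : Fin N → Prop) [DecidablePred p] (f : Fin N → ℝ)
    (j0 : Fin N) (h0 : p j0) (hp : ∀ j, p j → j = j0) :
    (∑ j, if p j then f j else 0) = f j0 := by
  rw [Finset.sum_eq_single j0 (fun j _ hj => if_neg fun hpj => hj (hp j hpj))
    (fun h => absurd (mem_univ j0) h), if_pos h0]

open Finset in
lemma sum_ite_zero'' {N : ℕ} (p : Fin N → Prop) [DecidablePred p] (f : Fin N → ℝ)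
    (hp : ∀ j, ¬ p j) :
    (∑ j, if p j then f j else 0) = 0 :=
  Finset.sum_eq_zero fun j _ => if_neg (hp j)

/-- The explicit inverse: lower bidiagonal. -/
noncomputable def Gmat (θ : ℝ) (n N : ℕ) : Matrix (Fin N) (Fin N) ℝ := fun i j =>
  (if j = i then (if (i:ℕ) = 0 then Real.sqrt n else Real.sqrt n / Real.sin θ) else 0) +
  (if (j:ℕ) + 1 = (i:ℕ) then -(Real.cos θ * Real.sqrt n / Real.sin θ) else 0)

theorem sphere_walk_matrix_norm_bounds (θ : ℝ) (hθ : θ ∈ Set.Ioo 0 (Real.pi / 2))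
    (n N : ℕ) (hn : 0 < n) (hN : 0 < N)
    (F : Matrix (Fin N) (Fin N) ℝ)
    (hF : ∀ i j : Fin N, F i j =
      if (j : ℕ) = 0 then Real.cos θ ^ (i : ℕ) / Real.sqrt n
      else if (j : ℕ) ≤ (i : ℕ) then
        Real.sin θ * Real.cos θ ^ ((i : ℕ) - (j : ℕ)) / Real.sqrt n
      else 0) :
    Real.sin θ / Real.sqrt n ≤ matOpNorm F ∧
      matOpNorm F ≤ 1 / ((1 - Real.cos θ) * Real.sqrt n) ∧
      matOpNorm F⁻¹ ≤ (1 + Real.cos θ) * Real.sqrt n / Real.sin θ ∧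
      matOpNorm F * matOpNorm F⁻¹ ≤
        (1 + Real.cos θ) / (Real.sin θ * (1 - Real.cos θ)) := by
  obtain ⟨hθ0, hθ2⟩ := hθ
  have hs : 0 < Real.sin θ := Real.sin_pos_of_pos_of_lt_pi hθ0 (by linarith [Real.pi_pos])
  have hs1 : Real.sin θ ≤ 1 := Real.sin_le_one θ
  have hc0 : 0 < Real.cos θ := Real.cos_pos_of_mem_Ioo ⟨by linarith [Real.pi_pos], hθ2⟩
  have hc1 : Real.cos θ < 1 :=
    lt_of_le_of_ne (Real.cos_le_one θ) (fun h => by nlinarith [Real.sin_sq_add_cos_sq θ])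
  have hsn : 0 < Real.sqrt n := Real.sqrt_pos.mpr (by exact_mod_cast hn)
  have h1c : (0:ℝ) < 1 - Real.cos θ := by linarith
  have hsne : Real.sin θ ≠ 0 := ne_of_gt hs
  have hsnne : Real.sqrt n ≠ 0 := ne_of_gt hsn
  -- Lower bound on ‖F‖
  have hlow : Real.sin θ / Real.sqrt n ≤ matOpNorm F := by
    have hlt : N - 1 < N := by omega
    set last : Fin N := ⟨N - 1, hlt⟩ with hlast
    refine le_trans ?_ (abs_entry_le_opNorm F last last)
    rw [hF]
    by_cases h0 : ((last : Fin N) : ℕ) = 0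
    · rw [if_pos h0, h0, pow_zero, abs_of_nonneg (by positivity)]
      gcongr
    · rw [if_neg h0, if_pos (le_refl _), Nat.sub_self, pow_zero, mul_one,
        abs_of_nonneg (by positivity)]
  -- Upper bound on ‖F‖
  have hFabs : ∀ i j : Fin N, |F i j| ≤
      (if (j:ℕ) ≤ (i:ℕ) then Real.cos θ ^ ((i:ℕ) - (j:ℕ)) else 0) / Real.sqrt n := by
    intro i j
    rw [hF]
    by_cases hj0 : (j:ℕ) = 0
    · rw [if_pos hj0, if_pos (by omega), abs_of_nonneg (by positivity),
        show (i:ℕ) - (j:ℕ) = (i:ℕ) by omega]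
    · rw [if_neg hj0]
      by_cases hji : (j:ℕ) ≤ (i:ℕ)
      · rw [if_pos hji, if_pos hji, abs_of_nonneg (by positivity)]
        gcongr
        nlinarith [pow_nonneg hc0.le ((i:ℕ) - (j:ℕ)),
          pow_le_one₀ hc0.le hc1.le (n := (i:ℕ) - (j:ℕ))]
      · rw [if_neg hji, if_neg hji]; simp
  have hup : matOpNorm F ≤ 1 / ((1 - Real.cos θ) * Real.sqrt n) := by
    refine schur_test F _ (by positivity) (fun i => ?_) (fun j => ?_)
    · calc ∑ j, |F i j|
          ≤ ∑ j : Fin N, (if (j:ℕ) ≤ (i:ℕ) then Real.cos θ ^ ((i:ℕ) - (j:ℕ)) else 0) /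
            Real.sqrt n := Finset.sum_le_sum fun j _ => hFabs i j
        _ = (∑ j : Fin N, if (j:ℕ) ≤ (i:ℕ) then Real.cos θ ^ ((i:ℕ) - (j:ℕ)) else 0) /
            Real.sqrt n := by rw [Finset.sum_div]
        _ ≤ (1 / (1 - Real.cos θ)) / Real.sqrt n := by
            gcongr
            exact sum_pow_cond_le hc0.le hc1 _ _ (fun j j' h h' he => Fin.ext (by omega))
        _ = 1 / ((1 - Real.cos θ) * Real.sqrt n) := by rw [div_div]
    · calc ∑ i, |F i j|
          ≤ ∑ i : Fin N, (if (j:ℕ) ≤ (i:ℕ) then Real.cos θ ^ ((i:ℕ) - (j:ℕ)) else 0) /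
            Real.sqrt n := Finset.sum_le_sum fun i _ => hFabs i j
        _ = (∑ i : Fin N, if (j:ℕ) ≤ (i:ℕ) then Real.cos θ ^ ((i:ℕ) - (j:ℕ)) else 0) /
            Real.sqrt n := by rw [Finset.sum_div]
        _ ≤ (1 / (1 - Real.cos θ)) / Real.sqrt n := by
            gcongr
            exact sum_pow_cond_le hc0.le hc1 _ _ (fun i i' h h' he => Fin.ext (by omega))
        _ = 1 / ((1 - Real.cos θ) * Real.sqrt n) := by rw [div_div]
  -- F⁻¹ = Gmat
  have hGF : Gmat θ n N * F = 1 := by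
    ext i k
    rw [Matrix.mul_apply, Matrix.one_apply]
    have expand : ∀ j : Fin N, Gmat θ n N i j * F j k =
        (if j = i then (if (i:ℕ) = 0 then Real.sqrt n else Real.sqrt n / Real.sin θ) * F j k
          else 0)
        + (if (j:ℕ) + 1 = (i:ℕ) then -(Real.cos θ * Real.sqrt n / Real.sin θ) * F j k
          else 0) := by
      intro j
      simp only [Gmat]
      split_ifs <;> ring
    rw [Finset.sum_congr rfl fun j _ => expand j, Finset.sum_add_distrib]
    rw [Finset.sum_ite_eq' Finset.univ i
      (fun j => (if (i:ℕ) = 0 then Real.sqrt n else Real.sqrt n / Real.sin θ) * F j k)]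
    rw [if_pos (Finset.mem_univ i)]
    by_cases hi : (i:ℕ) = 0
    · rw [sum_ite_zero'' _ _ (fun j => by omega), if_pos hi, add_zero]
      rw [hF]
      by_cases hk : (k:ℕ) = 0
      · rw [if_pos hk, if_pos (show i = k from Fin.ext (by omega)), hi, pow_zero]
        field_simp
      · rw [if_neg hk, if_neg (by omega), if_neg (fun h : i = k => hk (by omega)), mul_zero]
    · have hj0lt : (i:ℕ) - 1 < N := by omega
      set j0 : Fin N := ⟨(i:ℕ) - 1, hj0lt⟩ with hj0
      rw [sum_ite_unique _ _ j0 (by simp [hj0]; omega)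
        (fun j hj => Fin.ext (by simp [hj0]; omega))]
      rw [if_neg hi]
      have hj0c : (j0:ℕ) = (i:ℕ) - 1 := rfl
      rw [hF i k, hF j0 k, hj0c]
      by_cases hk : (k:ℕ) = 0
      · rw [if_pos hk, if_pos hk, if_neg (fun h : i = k => hi (by omega))]
        have hpow : Real.cos θ ^ (i:ℕ) = Real.cos θ ^ ((i:ℕ) - 1) * Real.cos θ := by
          rw [← pow_succ]; congr 1; omega
        rw [hpow]; field_simp; ring
      · rw [if_neg hk, if_neg hk]
        rcases lt_trichotomy (k:ℕ) (i:ℕ) with hki | hki | hki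
        · rw [if_pos (by omega), if_pos (by omega), if_neg (fun h : i = k => by omega)]
          have hpow : Real.cos θ ^ ((i:ℕ) - (k:ℕ))
              = Real.cos θ ^ ((i:ℕ) - 1 - (k:ℕ)) * Real.cos θ := by
            rw [← pow_succ]; congr 1; omega
          rw [hpow]; field_simp; ring
        · rw [if_pos (by omega), if_neg (by omega),
            if_pos (show i = k from Fin.ext (by omega))]
          rw [show (i:ℕ) - (k:ℕ) = 0 by omega, pow_zero]
          field_simp
          ring
        · rw [if_neg (by omega), if_neg (by omega), if_neg (fun h : i = k => by omega)]
          simp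
  have hFinv : F⁻¹ = Gmat θ n N := Matrix.inv_eq_left_inv hGF
  -- Upper bound on ‖F⁻¹‖
  have hGabs : ∀ i j : Fin N, |Gmat θ n N i j| ≤
      (if j = i then Real.sqrt n / Real.sin θ else 0) +
      (if (j:ℕ) + 1 = (i:ℕ) then Real.cos θ * Real.sqrt n / Real.sin θ else 0) := by
    intro i j
    have hd : |if (i:ℕ) = 0 then Real.sqrt n else Real.sqrt n / Real.sin θ|
        ≤ Real.sqrt n / Real.sin θ := by
      split_ifs with h
      · rw [abs_of_nonneg hsn.le, le_div_iff₀ hs]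
        nlinarith
      · rw [abs_of_nonneg (by positivity)]
    refine (abs_add_le _ _).trans (add_le_add ?_ ?_)
    · by_cases h : j = i
      · rw [if_pos h, if_pos h]; exact hd
      · rw [if_neg h, if_neg h, abs_zero]
    · split_ifs with h
      · rw [abs_neg, abs_of_nonneg (by positivity)]
      · simp
  have hbound : ∀ (p q : Fin N → Prop) [DecidablePred p] [DecidablePred q],
      (∀ j j', p j → p j' → j = j') → (∀ j j', q j → q j' → j = j') →
      (∑ j : Fin N, ((if p j then Real.sqrt n / Real.sin θ else 0) +
        (if q j then Real.cos θ * Real.sqrt n / Real.sin θ else 0)))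
        ≤ (1 + Real.cos θ) * Real.sqrt n / Real.sin θ := by
    intro p q _ _ hp hq
    rw [Finset.sum_add_distrib]
    calc _ ≤ Real.sqrt n / Real.sin θ + Real.cos θ * Real.sqrt n / Real.sin θ :=
          add_le_add (sum_ite_le p _ (by positivity) hp) (sum_ite_le q _ (by positivity) hq)
      _ = (1 + Real.cos θ) * Real.sqrt n / Real.sin θ := by ring
  have hinv : matOpNorm F⁻¹ ≤ (1 + Real.cos θ) * Real.sqrt n / Real.sin θ := by
    rw [hFinv]
    refine schur_test _ _ (by positivity) (fun i => ?_) (fun j => ?_)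
    · refine (Finset.sum_le_sum fun j _ => hGabs i j).trans
        (hbound _ _ (fun j j' h h' => h.trans h'.symm) (fun j j' h h' => Fin.ext (by omega)))
    · refine (Finset.sum_le_sum fun i _ => hGabs i j).trans
        (hbound _ _ (fun i i' h h' => h.symm.trans h') (fun i i' h h' => Fin.ext (by omega)))
  refine ⟨hlow, hup, hinv, ?_⟩
  calc matOpNorm F * matOpNorm F⁻¹
      ≤ (1 / ((1 - Real.cos θ) * Real.sqrt n)) *
        ((1 + Real.cos θ) * Real.sqrt n / Real.sin θ) :=
        mul_le_mul hup hinv (matOpNorm_nonneg _) (by positivity)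
    _ = (1 + Real.cos θ) / (Real.sin θ * (1 - Real.cos θ)) := by
        field_simp
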